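/- (Catenoidal hypersurface) Let a > 0, f(u) = a·cosh u and φ(u) = a·u. Then at every point (u, v, w) with cos w ≠ 0, the curvatures of the rotational hypersurface are 𝔠₁ = −1/(3a·cosh²u), 𝔠₂ = −1/(3a²·cosh⁴u) and 𝔠₃ = 1/(a³·cosh⁶u). -/

import Mathlib

open Real Matrix

noncomputable section

/-- A vector in Euclidean 4-space `𝔼⁴`. -/
def vec4 (a b c d : ℝ) : EuclideanSpace ℝ (Fin 4) :=
  (WithLp.equiv 2 (Fin 4 → ℝ)).symm ![a, b, c, d]

/-- Partial derivative in the `i`-th variable (`i = 0,1,2` for `u,v,w`)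
of a map `ℝ³ → 𝔼⁴`. -/
def pd : Fin 3 → (ℝ → ℝ → ℝ → EuclideanSpace ℝ (Fin 4)) →
    ℝ → ℝ → ℝ → EuclideanSpace ℝ (Fin 4)
  | 0, X, u, v, w => deriv (fun t => X t v w) u
  | 1, X, u, v, w => deriv (fun t => X u t w) v
  | 2, X, u, v, w => deriv (fun t => X u v t) w

/-- The rotational hypersurface in `𝔼⁴` generated by the profile curve
`u ↦ (f u, 0, 0, φ u)` rotated about the `x₄`-axis. -/
def rotHyp (f φ : ℝ → ℝ) (u v w : ℝ) : EuclideanSpace ℝ (Fin 4) :=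
  vec4 (f u * cos v * cos w) (f u * sin v * cos w) (f u * sin w) (φ u)

/-- The Gauss map `G = W^{-1/2}·(φ'·cos v·cos w, φ'·sin v·cos w, φ'·sin w, -f')`,
where `W = f'² + φ'²`. -/
def gaussMap (f φ : ℝ → ℝ) (u v w : ℝ) : EuclideanSpace ℝ (Fin 4) :=
  ((deriv f u ^ 2 + deriv φ u ^ 2) ^ (-(1 : ℝ) / 2)) •
    vec4 (deriv φ u * cos v * cos w) (deriv φ u * sin v * cos w)
      (deriv φ u * sin w) (-deriv f u)

/-- The first fundamental form matrix `I = (⟨∂ᵢx, ∂ⱼx⟩)ᵢⱼ`. -/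
def firstFF (f φ : ℝ → ℝ) (u v w : ℝ) : Matrix (Fin 3) (Fin 3) ℝ :=
  Matrix.of fun i j => (inner ℝ (pd i (rotHyp f φ) u v w) (pd j (rotHyp f φ) u v w) : ℝ)

/-- The second fundamental form matrix `II = (⟨∂ᵢ∂ⱼx, G⟩)ᵢⱼ`. -/
def secondFF (f φ : ℝ → ℝ) (u v w : ℝ) : Matrix (Fin 3) (Fin 3) ℝ :=
  Matrix.of fun i j => (inner ℝ (pd i (pd j (rotHyp f φ)) u v w) (gaussMap f φ u v w) : ℝ)

/-- The third fundamental form matrix `III = (⟨∂ᵢG, ∂ⱼG⟩)ᵢⱼ`. -/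
def thirdFF (f φ : ℝ → ℝ) (u v w : ℝ) : Matrix (Fin 3) (Fin 3) ℝ :=
  Matrix.of fun i j => (inner ℝ (pd i (gaussMap f φ) u v w) (pd j (gaussMap f φ) u v w) : ℝ)

/-- The shape operator matrix `S = I⁻¹ · II`. -/
def shapeOp (f φ : ℝ → ℝ) (u v w : ℝ) : Matrix (Fin 3) (Fin 3) ℝ :=
  (firstFF f φ u v w)⁻¹ * secondFF f φ u v w

/-- The fourth fundamental form matrix `IV = III · S`. -/
def fourthFF (f φ : ℝ → ℝ) (u v w : ℝ) : Matrix (Fin 3) (Fin 3) ℝ :=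
  thirdFF f φ u v w * shapeOp f φ u v w

lemma hasDerivAt_vec4 {g0 g1 g2 g3 : ℝ → ℝ} {d0 d1 d2 d3 t : ℝ}
    (h0 : HasDerivAt g0 d0 t) (h1 : HasDerivAt g1 d1 t)
    (h2 : HasDerivAt g2 d2 t) (h3 : HasDerivAt g3 d3 t) :
    HasDerivAt (fun s => vec4 (g0 s) (g1 s) (g2 s) (g3 s)) (vec4 d0 d1 d2 d3) t := by
  have hpi : HasDerivAt (fun s => ![g0 s, g1 s, g2 s, g3 s]) ![d0, d1, d2, d3] t := by
    rw [hasDerivAt_pi]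
    intro i
    fin_cases i <;> simpa
  have := ((PiLp.continuousLinearEquiv 2 ℝ (fun _ : Fin 4 => ℝ)).symm :
      (Fin 4 → ℝ) →L[ℝ] EuclideanSpace ℝ (Fin 4)).hasFDerivAt.comp_hasDerivAt t hpi
  exact this

lemma inner_vec4 (p q r s p' q' r' s' : ℝ) :
    (inner ℝ (vec4 p q r s) (vec4 p' q' r' s') : ℝ) = p*p' + q*q' + r*r' + s*s' := by
  simp [vec4, PiLp.inner_apply, Fin.sum_univ_four]
  ring

variable (a : ℝ)

lemma pd0_rot (u v w : ℝ) : pd 0 (rotHyp (fun u => a * Real.cosh u) (fun u => a * u)) u v w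
    = vec4 (a * sinh u * cos v * cos w) (a * sinh u * sin v * cos w) (a * sinh u * sin w) a := by
  show deriv _ u = _
  refine HasDerivAt.deriv ?_
  unfold rotHyp
  exact hasDerivAt_vec4
    ((((Real.hasDerivAt_cosh u).const_mul a).mul_const (cos v)).mul_const (cos w))
    ((((Real.hasDerivAt_cosh u).const_mul a).mul_const (sin v)).mul_const (cos w))
    (((Real.hasDerivAt_cosh u).const_mul a).mul_const (sin w))
    (by simpa using (hasDerivAt_id u).const_mul a)

lemma pd1_rot (u v w : ℝ) : pd 1 (rotHyp (fun u => a * Real.cosh u) (fun u => a * u)) u v w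
    = vec4 (-(a * Real.cosh u * sin v * cos w)) (a * Real.cosh u * cos v * cos w) 0 0 := by
  show deriv _ v = _
  refine HasDerivAt.deriv ?_
  unfold rotHyp
  refine hasDerivAt_vec4 ?_ ?_ ?_ ?_
  · have := ((Real.hasDerivAt_cos v).const_mul (a * Real.cosh u)).mul_const (cos w)
    convert this using 1 <;> first | rfl | ring
  · have := ((Real.hasDerivAt_sin v).const_mul (a * Real.cosh u)).mul_const (cos w)
    convert this using 1 <;> first | rfl | ring
  · exact hasDerivAt_const v _
  · exact hasDerivAt_const v _

lemma pd2_rot (u v w : ℝ) : pd 2 (rotHyp (fun u => a * Real.cosh u) (fun u => a * u)) u v w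
    = vec4 (-(a * Real.cosh u * cos v * sin w)) (-(a * Real.cosh u * sin v * sin w))
        (a * Real.cosh u * cos w) 0 := by
  show deriv _ w = _
  refine HasDerivAt.deriv ?_
  unfold rotHyp
  refine hasDerivAt_vec4 ?_ ?_ ?_ ?_
  · have := (Real.hasDerivAt_cos w).const_mul (a * Real.cosh u * cos v)
    convert this using 1 <;> first | rfl | ring
  · have := (Real.hasDerivAt_cos w).const_mul (a * Real.cosh u * sin v)
    convert this using 1 <;> first | rfl | ring
  · have := (Real.hasDerivAt_sin w).const_mul (a * Real.cosh u)
    convert this using 1 <;> first | rfl | ring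
  · exact hasDerivAt_const w _

set_option linter.unreachableTactic false

set_option linter.unusedTactic false

set_option linter.unnecessarySeqFocus false

lemma sd00 (u v w : ℝ) : pd 0 (pd 0 (rotHyp (fun u => a * Real.cosh u) (fun u => a * u))) u v w
    = vec4 (a * Real.cosh u * cos v * cos w) (a * Real.cosh u * sin v * cos w)
        (a * Real.cosh u * sin w) 0 := by
  show deriv _ u = _
  have he : (fun t => pd 0 (rotHyp (fun u => a * Real.cosh u) (fun u => a * u)) t v w) = fun t =>
      vec4 (a * sinh t * cos v * cos w) (a * sinh t * sin v * cos w) (a * sinh t * sin w) a := by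
    funext t; exact pd0_rot a t v w
  rw [he]
  refine HasDerivAt.deriv (hasDerivAt_vec4 ?_ ?_ ?_ (hasDerivAt_const u _))
  · convert (((Real.hasDerivAt_sinh u).const_mul a).mul_const (cos v)).mul_const (cos w) using 1 <;> first | rfl | ring
  · convert (((Real.hasDerivAt_sinh u).const_mul a).mul_const (sin v)).mul_const (cos w) using 1 <;> first | rfl | ring
  · convert ((Real.hasDerivAt_sinh u).const_mul a).mul_const (sin w) using 1 <;> first | rfl | ring

lemma sd10 (u v w : ℝ) : pd 1 (pd 0 (rotHyp (fun u => a * Real.cosh u) (fun u => a * u))) u v w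
    = vec4 (-(a * sinh u * sin v * cos w)) (a * sinh u * cos v * cos w) 0 0 := by
  show deriv _ v = _
  have he : (fun t => pd 0 (rotHyp (fun u => a * Real.cosh u) (fun u => a * u)) u t w) = fun t =>
      vec4 (a * sinh u * cos t * cos w) (a * sinh u * sin t * cos w) (a * sinh u * sin w) a := by
    funext t; exact pd0_rot a u t w
  rw [he]
  refine HasDerivAt.deriv (hasDerivAt_vec4 ?_ ?_ (hasDerivAt_const v _) (hasDerivAt_const v _))
  · convert ((Real.hasDerivAt_cos v).const_mul (a * sinh u)).mul_const (cos w) using 1 <;> first | rfl | ring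
  · convert ((Real.hasDerivAt_sin v).const_mul (a * sinh u)).mul_const (cos w) using 1 <;> first | rfl | ring

lemma sd20 (u v w : ℝ) : pd 2 (pd 0 (rotHyp (fun u => a * Real.cosh u) (fun u => a * u))) u v w
    = vec4 (-(a * sinh u * cos v * sin w)) (-(a * sinh u * sin v * sin w))
        (a * sinh u * cos w) 0 := by
  show deriv _ w = _
  have he : (fun t => pd 0 (rotHyp (fun u => a * Real.cosh u) (fun u => a * u)) u v t) = fun t =>
      vec4 (a * sinh u * cos v * cos t) (a * sinh u * sin v * cos t) (a * sinh u * sin t) a := by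
    funext t; exact pd0_rot a u v t
  rw [he]
  refine HasDerivAt.deriv (hasDerivAt_vec4 ?_ ?_ ?_ (hasDerivAt_const w _))
  · convert (Real.hasDerivAt_cos w).const_mul (a * sinh u * cos v) using 1 <;> first | rfl | ring
  · convert (Real.hasDerivAt_cos w).const_mul (a * sinh u * sin v) using 1 <;> first | rfl | ring
  · convert (Real.hasDerivAt_sin w).const_mul (a * sinh u) using 1 <;> first | rfl | ring

lemma sd01 (u v w : ℝ) : pd 0 (pd 1 (rotHyp (fun u => a * Real.cosh u) (fun u => a * u))) u v w
    = vec4 (-(a * sinh u * sin v * cos w)) (a * sinh u * cos v * cos w) 0 0 := by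
  show deriv _ u = _
  have he : (fun t => pd 1 (rotHyp (fun u => a * Real.cosh u) (fun u => a * u)) t v w) = fun t =>
      vec4 (-(a * Real.cosh t * sin v * cos w)) (a * Real.cosh t * cos v * cos w) 0 0 := by
    funext t; exact pd1_rot a t v w
  rw [he]
  refine HasDerivAt.deriv (hasDerivAt_vec4 ?_ ?_ (hasDerivAt_const u _) (hasDerivAt_const u _))
  · convert ((((Real.hasDerivAt_cosh u).const_mul a).mul_const (sin v)).mul_const (cos w)).neg using 1 <;> first | rfl | ring
  · convert (((Real.hasDerivAt_cosh u).const_mul a).mul_const (cos v)).mul_const (cos w) using 1 <;> first | rfl | ring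

lemma sd11 (u v w : ℝ) : pd 1 (pd 1 (rotHyp (fun u => a * Real.cosh u) (fun u => a * u))) u v w
    = vec4 (-(a * Real.cosh u * cos v * cos w)) (-(a * Real.cosh u * sin v * cos w)) 0 0 := by
  show deriv _ v = _
  have he : (fun t => pd 1 (rotHyp (fun u => a * Real.cosh u) (fun u => a * u)) u t w) = fun t =>
      vec4 (-(a * Real.cosh u * sin t * cos w)) (a * Real.cosh u * cos t * cos w) 0 0 := by
    funext t; exact pd1_rot a u t w
  rw [he]
  refine HasDerivAt.deriv (hasDerivAt_vec4 ?_ ?_ (hasDerivAt_const v _) (hasDerivAt_const v _))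
  · convert (((Real.hasDerivAt_sin v).const_mul (a * Real.cosh u)).mul_const (cos w)).neg using 1 <;> first | rfl | ring
  · convert ((Real.hasDerivAt_cos v).const_mul (a * Real.cosh u)).mul_const (cos w) using 1 <;> first | rfl | ring

lemma sd21 (u v w : ℝ) : pd 2 (pd 1 (rotHyp (fun u => a * Real.cosh u) (fun u => a * u))) u v w
    = vec4 (a * Real.cosh u * sin v * sin w) (-(a * Real.cosh u * cos v * sin w)) 0 0 := by
  show deriv _ w = _
  have he : (fun t => pd 1 (rotHyp (fun u => a * Real.cosh u) (fun u => a * u)) u v t) = fun t =>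
      vec4 (-(a * Real.cosh u * sin v * cos t)) (a * Real.cosh u * cos v * cos t) 0 0 := by
    funext t; exact pd1_rot a u v t
  rw [he]
  refine HasDerivAt.deriv (hasDerivAt_vec4 ?_ ?_ (hasDerivAt_const w _) (hasDerivAt_const w _))
  · convert ((Real.hasDerivAt_cos w).const_mul (a * Real.cosh u * sin v)).neg using 1 <;> first | rfl | ring
  · convert (Real.hasDerivAt_cos w).const_mul (a * Real.cosh u * cos v) using 1 <;> first | rfl | ring

lemma sd02 (u v w : ℝ) : pd 0 (pd 2 (rotHyp (fun u => a * Real.cosh u) (fun u => a * u))) u v w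
    = vec4 (-(a * sinh u * cos v * sin w)) (-(a * sinh u * sin v * sin w)) (a * sinh u * cos w) 0 := by
  show deriv _ u = _
  have he : (fun t => pd 2 (rotHyp (fun u => a * Real.cosh u) (fun u => a * u)) t v w) = fun t =>
      vec4 (-(a * Real.cosh t * cos v * sin w)) (-(a * Real.cosh t * sin v * sin w)) (a * Real.cosh t * cos w) 0 := by
    funext t; exact pd2_rot a t v w
  rw [he]
  refine HasDerivAt.deriv (hasDerivAt_vec4 ?_ ?_ ?_ (hasDerivAt_const u _))
  · convert ((((Real.hasDerivAt_cosh u).const_mul a).mul_const (cos v)).mul_const (sin w)).neg using 1 <;> first | rfl | ring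
  · convert ((((Real.hasDerivAt_cosh u).const_mul a).mul_const (sin v)).mul_const (sin w)).neg using 1 <;> first | rfl | ring
  · convert (((Real.hasDerivAt_cosh u).const_mul a).mul_const (cos w)) using 1 <;> first | rfl | ring

lemma sd12 (u v w : ℝ) : pd 1 (pd 2 (rotHyp (fun u => a * Real.cosh u) (fun u => a * u))) u v w
    = vec4 (a * Real.cosh u * sin v * sin w) (-(a * Real.cosh u * cos v * sin w)) 0 0 := by
  show deriv _ v = _
  have he : (fun t => pd 2 (rotHyp (fun u => a * Real.cosh u) (fun u => a * u)) u t w) = fun t =>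
      vec4 (-(a * Real.cosh u * cos t * sin w)) (-(a * Real.cosh u * sin t * sin w)) (a * Real.cosh u * cos w) 0 := by
    funext t; exact pd2_rot a u t w
  rw [he]
  refine HasDerivAt.deriv (hasDerivAt_vec4 ?_ ?_ (hasDerivAt_const v _) (hasDerivAt_const v _))
  · convert (((Real.hasDerivAt_cos v).const_mul (a * Real.cosh u)).mul_const (sin w)).neg using 1 <;> first | rfl | ring
  · convert (((Real.hasDerivAt_sin v).const_mul (a * Real.cosh u)).mul_const (sin w)).neg using 1 <;> first | rfl | ring

lemma sd22 (u v w : ℝ) : pd 2 (pd 2 (rotHyp (fun u => a * Real.cosh u) (fun u => a * u))) u v w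
    = vec4 (-(a * Real.cosh u * cos v * cos w)) (-(a * Real.cosh u * sin v * cos w)) (-(a * Real.cosh u * sin w)) 0 := by
  show deriv _ w = _
  have he : (fun t => pd 2 (rotHyp (fun u => a * Real.cosh u) (fun u => a * u)) u v t) = fun t =>
      vec4 (-(a * Real.cosh u * cos v * sin t)) (-(a * Real.cosh u * sin v * sin t)) (a * Real.cosh u * cos t) 0 := by
    funext t; exact pd2_rot a u v t
  rw [he]
  refine HasDerivAt.deriv (hasDerivAt_vec4 ?_ ?_ ?_ (hasDerivAt_const w _))
  · convert ((Real.hasDerivAt_sin w).const_mul (a * Real.cosh u * cos v)).neg using 1 <;> first | rfl | ring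
  · convert ((Real.hasDerivAt_sin w).const_mul (a * Real.cosh u * sin v)).neg using 1 <;> first | rfl | ring
  · convert (Real.hasDerivAt_cos w).const_mul (a * Real.cosh u) using 1 <;> first | rfl | ring

lemma gauss_eq (ha : 0 < a) (u v w : ℝ) :
    gaussMap (fun u => a * Real.cosh u) (fun u => a * u) u v w
      = (a * Real.cosh u)⁻¹ •
        vec4 (a * cos v * cos w) (a * sin v * cos w) (a * sin w) (-(a * sinh u)) := by
  have hdf : deriv (fun u => a * Real.cosh u) u = a * sinh u :=
    (((Real.hasDerivAt_cosh u)).const_mul a).deriv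
  have hdφ : deriv (fun u : ℝ => a * u) u = a := by
    simpa using ((hasDerivAt_id u).const_mul a).deriv
  have hc : ((a * sinh u) ^ 2 + a ^ 2 : ℝ) ^ (-(1 : ℝ) / 2) = (a * Real.cosh u)⁻¹ := by
    have h1 : ((a * sinh u) ^ 2 + a ^ 2 : ℝ) = (a * Real.cosh u) ^ 2 := by
      have := Real.cosh_sq u; nlinarith [this]
    have hpos : (0 : ℝ) < a * Real.cosh u := mul_pos ha (Real.cosh_pos u)
    rw [h1, show (-(1:ℝ)/2) = -(1/2) by norm_num, Real.rpow_neg (sq_nonneg _),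
      ← Real.sqrt_eq_rpow, Real.sqrt_sq hpos.le]
  rw [gaussMap, hdf, hdφ, hc]

@[simp] lemma vec4_apply (p q r s : ℝ) (i : Fin 4) : vec4 p q r s i = ![p,q,r,s] i := rfl

lemma firstFF_eq (u v w : ℝ) :
    firstFF (fun u => a * Real.cosh u) (fun u => a * u) u v w
      = !![a^2 * Real.cosh u^2, 0, 0; 0, a^2 * Real.cosh u^2 * cos w^2, 0; 0, 0, a^2 * Real.cosh u^2] := by
  have hv := Real.sin_sq_add_cos_sq v
  have hw := Real.sin_sq_add_cos_sq w
  have hu := Real.cosh_sq u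
  ext i j
  fin_cases i <;> fin_cases j
  all_goals simp [firstFF, pd0_rot, pd1_rot, pd2_rot, inner_vec4, -inner_self_eq_norm_sq_to_K, Fin.sum_univ_four, Matrix.vecHead, Matrix.vecTail]
  all_goals first
      | ring1
      | (linear_combination (a^2*Real.sinh u^2*Real.cos w^2)*hv + (a^2*Real.sinh u^2)*hw - a^2*hu)
      | (linear_combination (-(a^2*Real.sinh u*Real.cos w*Real.cosh u*Real.sin w))*hv)
      | (linear_combination (a^2*Real.cosh u^2*Real.cos w^2)*hv)
      | (linear_combination (a^2*Real.cosh u^2*Real.sin w^2)*hv + (a^2*Real.cosh u^2)*hw)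

set_option maxHeartbeats 2000000 in

lemma secondFF_eq (ha : 0 < a) (u v w : ℝ) :
    secondFF (fun u => a * Real.cosh u) (fun u => a * u) u v w
      = !![a, 0, 0; 0, -(a * cos w^2), 0; 0, 0, -a] := by
  have hv := Real.sin_sq_add_cos_sq v
  have hw := Real.sin_sq_add_cos_sq w
  have hu := Real.cosh_sq u
  have hca : a * Real.cosh u ≠ 0 := (mul_pos ha (Real.cosh_pos u)).ne'
  ext i j
  fin_cases i <;> fin_cases j
  all_goals simp [secondFF, gauss_eq a ha, sd00, sd01, sd02, sd10, sd11, sd12, sd20, sd21, sd22, inner_vec4, real_inner_smul_right,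
    Fin.sum_univ_four, Matrix.vecHead, Matrix.vecTail]
  all_goals field_simp
  all_goals first
      | ring1
      | (linear_combination (a^2*Real.cosh u*Real.cos w^2)*hv + (a^2*Real.cosh u)*hw)
      | (linear_combination (-(a^4*Real.sinh u*Real.sin w*Real.cos w*Real.cosh u^2))*hv)
      | (linear_combination (-(a^3*Real.cosh u^2*Real.cos w^2))*hv)
      | (linear_combination (-(a^4*Real.cosh u^3*Real.cos w^2))*hv + (-(a^4*Real.cosh u^3))*hw)
      | (right; ring1)
      | (right; linear_combination (-(a^2*Real.sinh u*Real.sin w*Real.cos w))*hv)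
      | (linear_combination (Real.cos w^2*(1+a^4*Real.cosh u^3))*hv + (1+a^4*Real.cosh u^3)*hw)
      | (linear_combination (Real.cos w^2*(a^4*Real.cosh u^3-1))*hv + (a^4*Real.cosh u^3)*hw)
      | (linear_combination (Real.cos w^2*(a^4*Real.cosh u^3-1))*hv + (a^4*Real.cosh u^3-1)*hw)
      | (linear_combination (-Real.cos w^2)*hv - hw)
      | (linear_combination (-Real.cos w^2)*hv)
      | (linear_combination (Real.cos w^2)*hv + hw)

set_option maxHeartbeats 1000000 in

lemma shapeOp_eq (ha : 0 < a) (u v w : ℝ) (hcw : cos w ≠ 0) :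
    shapeOp (fun u => a * Real.cosh u) (fun u => a * u) u v w
      = !![(a * Real.cosh u^2)⁻¹, 0, 0; 0, -(a * Real.cosh u^2)⁻¹, 0; 0, 0, -(a * Real.cosh u^2)⁻¹] := by
  have hch : Real.cosh u ≠ 0 := (Real.cosh_pos u).ne'
  have ha' : a ≠ 0 := ha.ne'
  have hIinv : (firstFF (fun u => a * Real.cosh u) (fun u => a * u) u v w)⁻¹
      = !![(a^2 * Real.cosh u^2)⁻¹, 0, 0; 0, (a^2 * Real.cosh u^2 * cos w^2)⁻¹, 0; 0, 0, (a^2 * Real.cosh u^2)⁻¹] := by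
    apply Matrix.inv_eq_right_inv
    rw [firstFF_eq]
    ext i j
    fin_cases i <;> fin_cases j <;>
      · simp [Matrix.mul_apply, Fin.sum_univ_three, Matrix.one_apply, Matrix.vecHead, Matrix.vecTail]
        all_goals field_simp
        all_goals ring
  rw [shapeOp, hIinv, secondFF_eq a ha]
  ext i j
  fin_cases i <;> fin_cases j <;>
    · simp [Matrix.mul_apply, Fin.sum_univ_three, Matrix.vecHead, Matrix.vecTail]
      all_goals field_simp
      all_goals ring

lemma detS (ha : 0 < a) (u v w : ℝ) (hcw : cos w ≠ 0) (lam : ℝ) :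
    (shapeOp (fun u => a * Real.cosh u) (fun u => a * u) u v w
        - lam • (1 : Matrix (Fin 3) (Fin 3) ℝ)).det
      = ((a * Real.cosh u^2)⁻¹ - lam) *
        ((-(a * Real.cosh u^2)⁻¹ - lam) * ((-(a * Real.cosh u^2)⁻¹) - lam)) := by
  rw [shapeOp_eq a ha u v w hcw]
  simp [Matrix.det_fin_three, Matrix.sub_apply, Matrix.smul_apply, Matrix.one_apply]
  ring

/-- catenoidal hypersurface.  For `a > 0`, `f(u) = a·cosh u` and
`φ(u) = a·u`, the curvatures of the rotational hypersurface — defined by the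
characteristic polynomial identity — are `c₁ = -1/(3a·cosh²u)`,
`c₂ = -1/(3a²·cosh⁴u)` and `c₃ = 1/(a³·cosh⁶u)` at every point with `cos w ≠ 0`. -/
theorem catenoidal_hypersurface_curvatures (a : ℝ) (ha : 0 < a)
    (c₁ c₂ c₃ : ℝ → ℝ → ℝ → ℝ)
    (hchar : ∀ u v w lam : ℝ,
      (shapeOp (fun u => a * Real.cosh u) (fun u => a * u) u v w
          - lam • (1 : Matrix (Fin 3) (Fin 3) ℝ)).det
        = -lam ^ 3 + 3 * c₁ u v w * lam ^ 2 - 3 * c₂ u v w * lam + c₃ u v w) :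
    ∀ u v w : ℝ, cos w ≠ 0 →
      c₁ u v w = -1 / (3 * a * Real.cosh u ^ 2) ∧
      c₂ u v w = -1 / (3 * a ^ 2 * Real.cosh u ^ 4) ∧
      c₃ u v w = 1 / (a ^ 3 * Real.cosh u ^ 6) := by
  intro u v w hcw
  have hch : Real.cosh u ≠ 0 := (Real.cosh_pos u).ne'
  have ha' : a ≠ 0 := ha.ne'
  set x := (a * Real.cosh u ^ 2)⁻¹ with hx
  have hpoly : ∀ lam : ℝ, -lam ^ 3 + 3 * c₁ u v w * lam ^ 2 - 3 * c₂ u v w * lam + c₃ u v w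
      = (x - lam) * ((-x - lam) * (-x - lam)) := fun lam => by
    rw [← hchar u v w lam, detS a ha u v w hcw lam]
  have E0 := hpoly 0
  have E1 := hpoly 1
  have E2 := hpoly (-1)
  have hc3 : c₃ u v w = x ^ 3 := by linear_combination E0
  have hc1 : c₁ u v w = -x / 3 := by
    linear_combination (1/6) * E1 + (1/6) * E2 - (1/3) * E0
  have hc2 : c₂ u v w = -x ^ 2 / 3 := by
    linear_combination (1/6) * E2 - (1/6) * E1
  refine ⟨?_, ?_, ?_⟩
  · rw [hc1, hx]; field_simp
  · rw [hc2, hx]; field_simp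
  · rw [hc3, hx]; field_simp

end
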